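/- Let θ and ρ be two distinct nontrivial equivalence relations on E_k and let γ = θ ∩ ρ. If Δ ⊊ γ ⊊ θ and γ ⊊ ρ, then Pol(θ) ∩ Pol(ρ) ⊊ Pol(θ) ∩ Pol(γ) ⊊ Pol(θ). -/

import Mathlib

/-- A finitary operation on `Fin k`: a pair of an arity `n` and a function
`(Fin n → Fin k) → Fin k`. -/
abbrev Ops (k : ℕ) := Σ n : ℕ, ((Fin n → Fin k) → Fin k)

/-- The set of finitary operations preserving a binary relation `θ` on `Fin k`. -/
def PolB {k : ℕ} (θ : Set (Fin k × Fin k)) : Set (Ops k) :=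
  {f | ∀ a b : Fin f.1 → Fin k, (∀ i, (a i, b i) ∈ θ) → (f.2 a, f.2 b) ∈ θ}

/-- The set of finitary operations preserving an `h`-ary relation `ρ` on `Fin k`. -/
def PolH {k h : ℕ} (ρ : Set (Fin h → Fin k)) : Set (Ops k) :=
  {f | ∀ M : Fin h → Fin f.1 → Fin k,
    (∀ i, (fun j => M j i) ∈ ρ) → (fun j => f.2 (M j)) ∈ ρ}

/-- A clone: contains all projections and is closed under composition. -/
def IsClone {k : ℕ} (C : Set (Ops k)) : Prop :=
  (∀ (n : ℕ) (i : Fin n), (⟨n, fun x => x i⟩ : Ops k) ∈ C) ∧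
  (∀ (n m : ℕ) (f : (Fin n → Fin k) → Fin k) (g : Fin n → (Fin m → Fin k) → Fin k),
    (⟨n, f⟩ : Ops k) ∈ C → (∀ i, (⟨m, g i⟩ : Ops k) ∈ C) →
    (⟨m, fun x => f fun i => g i x⟩ : Ops k) ∈ C)

/-- `C` is maximal in `D`: `C ⊊ D` and no clone lies strictly between them. -/
def MaximalIn {k : ℕ} (C D : Set (Ops k)) : Prop :=
  C ⊂ D ∧ ∀ F : Set (Ops k), IsClone F → ¬(C ⊂ F ∧ F ⊂ D)

/-- `θ` is an equivalence relation (as a set of pairs). -/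
def IsEquivRel {A : Type*} (θ : Set (A × A)) : Prop :=
  (∀ a, (a, a) ∈ θ) ∧ (∀ a b, (a, b) ∈ θ → (b, a) ∈ θ) ∧
    (∀ a b c, (a, b) ∈ θ → (b, c) ∈ θ → (a, c) ∈ θ)

/-- The diagonal relation `Δ` on `Fin k`. -/
def diag (k : ℕ) : Set (Fin k × Fin k) := {p | p.1 = p.2}

/-- A nontrivial equivalence relation: `Δ ⊊ θ ⊊ (Fin k)²`. -/
def NontrivEquiv {k : ℕ} (θ : Set (Fin k × Fin k)) : Prop :=
  IsEquivRel θ ∧ diag k ⊂ θ ∧ θ ⊂ Set.univ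

/-- Relational composition `α ∘ β = {(a,c) : ∃ b, (a,b) ∈ α ∧ (b,c) ∈ β}`. -/
def relComp {k : ℕ} (α β : Set (Fin k × Fin k)) : Set (Fin k × Fin k) :=
  {p | ∃ b, (p.1, b) ∈ α ∧ (b, p.2) ∈ β}

/-- The set of equivalence classes of `θ`. -/
def classesOf {A : Type*} (θ : Set (A × A)) : Set (Set A) :=
  {S | ∃ a : A, S = {b | (a, b) ∈ θ}}

/-- Totally reflexive: every tuple with a repeated entry is in `ρ`. -/
def TotallyReflexive {k h : ℕ} (ρ : Set (Fin h → Fin k)) : Prop :=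
  ∀ v : Fin h → Fin k, (∃ i j : Fin h, i ≠ j ∧ v i = v j) → v ∈ ρ

/-- Totally symmetric: closed under all permutations of coordinates. -/
def TotallySymmetric {k h : ℕ} (ρ : Set (Fin h → Fin k)) : Prop :=
  ∀ (v : Fin h → Fin k) (σ : Equiv.Perm (Fin h)), v ∈ ρ → v ∘ ⇑σ ∈ ρ

/-- The center of an `h`-ary relation: elements `a` such that every tuple whose
first coordinate is `a` lies in `ρ`. -/
def center {k h : ℕ} (ρ : Set (Fin h → Fin k)) : Set (Fin k) :=
  {a | ∀ v : Fin h → Fin k, (∀ i : Fin h, (i : ℕ) = 0 → v i = a) → v ∈ ρ}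

/-- An `h`-ary central relation. -/
def IsCentralRel {k h : ℕ} (ρ : Set (Fin h → Fin k)) : Prop :=
  ρ ≠ Set.univ ∧ TotallyReflexive ρ ∧ TotallySymmetric ρ ∧ (center ρ).Nonempty

/-- `η = {(u₁,…,u_h) : (u₁,u₂) ∈ θ}` (0-indexed: first two coordinates θ-related). -/
def eta {k : ℕ} (h : ℕ) (θ : Set (Fin k × Fin k)) : Set (Fin h → Fin k) :=
  {v | ∀ i j : Fin h, (i : ℕ) = 0 → (j : ℕ) = 1 → (v i, v j) ∈ θ}

/-- `ρ_{l,θ}`: tuples whose coordinates from position `l` onwards can be moved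
inside their θ-classes so as to land in `ρ` (0-indexed coordinates). -/
def rhoTh {k h : ℕ} (l : ℕ) (θ : Set (Fin k × Fin k)) (ρ : Set (Fin h → Fin k)) :
    Set (Fin h → Fin k) :=
  {a | ∃ u : Fin h → Fin k, (∀ j : Fin h, l ≤ (j : ℕ) → (u j, a j) ∈ θ) ∧
    (fun j : Fin h => if (j : ℕ) < l then a j else u j) ∈ ρ}

/-- `ρ` is θ-closed: `ρ = ρ_{0,θ}`. -/
def ThetaClosed {k h : ℕ} (θ : Set (Fin k × Fin k)) (ρ : Set (Fin h → Fin k)) : Prop :=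
  ρ = rhoTh 0 θ ρ

/-- `γ_σ = {(a_{σ(1)},…,a_{σ(h)}) : a ∈ γ}`. -/
def permuted {k h : ℕ} (σ : Equiv.Perm (Fin h)) (γ : Set (Fin h → Fin k)) :
    Set (Fin h → Fin k) :=
  {w | w ∘ ⇑σ.symm ∈ γ}

/-- A transversal of order `l` for the θ-classes: a system of representatives
(pairwise θ-unrelated, meeting every class) such that every tuple whose
coordinates from position `l` onwards lie in `T` belongs to `ρ`. -/
def IsTransversal {k h : ℕ} (θ : Set (Fin k × Fin k)) (ρ : Set (Fin h → Fin k)) (l : ℕ)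
    (T : Set (Fin k)) : Prop :=
  (∀ u ∈ T, ∀ v ∈ T, u ≠ v → (u, v) ∉ θ) ∧
  (∀ a : Fin k, ∃ u ∈ T, (a, u) ∈ θ) ∧
  (∀ w : Fin h → Fin k, (∀ j : Fin h, l ≤ (j : ℕ) → w j ∈ T) → w ∈ ρ)

/-- `ρ` is weakly θ-closed of order `l` (`1 ≤ l ≤ h-1`). -/
def WeaklyThetaClosed {k h : ℕ} (θ : Set (Fin k × Fin k)) (ρ : Set (Fin h → Fin k))
    (l : ℕ) : Prop :=
  1 ≤ l ∧ l ≤ h - 1 ∧ (∃ T : Set (Fin k), IsTransversal θ ρ (l - 1) T) ∧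
  ρ = ⋂ σ : Equiv.Perm (Fin h), permuted σ (rhoTh l θ ρ)

/-- Type I: `η ⊆ ρ` and every θ-class contains a central element of `ρ`. -/
def TypeI {k h : ℕ} (θ : Set (Fin k × Fin k)) (ρ : Set (Fin h → Fin k)) : Prop :=
  eta h θ ⊆ ρ ∧ ∀ a : Fin k, ∃ c : Fin k, (a, c) ∈ θ ∧ c ∈ center ρ

/-- Type II: `ρ` is θ-closed. -/
def TypeII {k h : ℕ} (θ : Set (Fin k × Fin k)) (ρ : Set (Fin h → Fin k)) : Prop :=
  ThetaClosed θ ρ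

/-- Type III: `ρ` is weakly θ-closed of some order and `η ⊆ ρ`. -/
def TypeIII {k h : ℕ} (θ : Set (Fin k × Fin k)) (ρ : Set (Fin h → Fin k)) : Prop :=
  (∃ l : ℕ, WeaklyThetaClosed θ ρ l) ∧ eta h θ ⊆ ρ

/-- `τ` is a diagonal relation through `θ`. -/
def IsDiagonal {k h : ℕ} (θ : Set (Fin k × Fin k)) (τ : Set (Fin h → Fin k)) : Prop :=
  ∃ (ε₁ : Setoid (Fin h)) (ε₂ : Set (Fin h × Fin h)),
    (∀ p ∈ ε₂, (∀ j, ε₁.r p.1 j → p.1 ≤ j) ∧ (∀ j, ε₁.r p.2 j → p.2 ≤ j)) ∧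
    (∀ i : Fin h, (∀ j, ε₁.r i j → i ≤ j) → (i, i) ∈ ε₂) ∧
    (∀ i j, (i, j) ∈ ε₂ → (j, i) ∈ ε₂) ∧
    (∀ i j l, (i, j) ∈ ε₂ → (j, l) ∈ ε₂ → (i, l) ∈ ε₂) ∧
    τ = {a | (∀ i j, ε₁.r i j → a i = a j) ∧ (∀ i j, (i, j) ∈ ε₂ → (a i, a j) ∈ θ)}

/-- `ρ^l_{0,θ}`: `l`-tuples which can be moved inside their θ-classes so that
every `h`-tuple with all entries among the moved elements lies in `ρ`. -/
def rhoPow {k h : ℕ} (l : ℕ) (θ : Set (Fin k × Fin k)) (ρ : Set (Fin h → Fin k)) :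
    Set (Fin l → Fin k) :=
  {u | ∃ e : Fin l → Fin k, (∀ i, (e i, u i) ∈ θ) ∧
    ∀ w : Fin h → Fin k, (∀ j, ∃ i, w j = e i) → w ∈ ρ}

/-- An `h`-regular family of equivalence relations. -/
def IsHRegFamily {A : Type*} (h : ℕ) {m : ℕ} (T : Fin m → Set (A × A)) : Prop :=
  (∀ i, IsEquivRel (T i)) ∧
  (∀ i, (classesOf (T i)).ncard = h) ∧
  (∀ x : Fin m → A, (⋂ i, {b | (x i, b) ∈ T i}).Nonempty)

/-- The `h`-regular relation determined by the family `T`: tuples whose set of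
components meets at most `h-1` classes of each member of the family. -/
def hRegRel {A : Type*} (h : ℕ) {m : ℕ} (T : Fin m → Set (A × A)) : Set (Fin h → A) :=
  {a | ∀ i : Fin m, {S ∈ classesOf (T i) | ∃ j : Fin h, a j ∈ S}.ncard ≤ h - 1}

/-- `ρ` is an `h`-regular relation: determined by some `h`-regular family. -/
def IsHRegularRel {A : Type*} (h : ℕ) (ρ : Set (Fin h → A)) : Prop :=
  ∃ m : ℕ, 1 ≤ m ∧ ∃ T : Fin m → Set (A × A), IsHRegFamily h T ∧ ρ = hRegRel h T

/-- For distinct nontrivial equivalence relations `θ`, `ρ` with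
`Δ ⊊ γ ⊊ θ` and `γ ⊊ ρ` where `γ = θ ∩ ρ`, one has
`Pol(θ) ∩ Pol(ρ) ⊊ Pol(θ) ∩ Pol(γ) ⊊ Pol(θ)`. -/
theorem stmt5 (k : ℕ) (θ ρ : Set (Fin k × Fin k))
    (hθ : NontrivEquiv θ) (hρ : NontrivEquiv ρ) (hne : θ ≠ ρ)
    (h1 : diag k ⊂ θ ∩ ρ) (h2 : θ ∩ ρ ⊂ θ) (h3 : θ ∩ ρ ⊂ ρ) :
    PolB θ ∩ PolB ρ ⊂ PolB θ ∩ PolB (θ ∩ ρ) ∧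
      PolB θ ∩ PolB (θ ∩ ρ) ⊂ PolB θ := by
  classical
  obtain ⟨⟨θr, θs, θt⟩, -, -⟩ := hθ
  obtain ⟨⟨ρr, ρs, ρt⟩, -, -⟩ := hρ
  constructor
  · constructor
    · rintro f ⟨hfθ, hfρ⟩
      exact ⟨hfθ, fun a b hab =>
        ⟨hfθ a b (fun i => (hab i).1), hfρ a b fun i => (hab i).2⟩⟩
    · intro hsub
      obtain ⟨⟨c, d⟩, hcdρ, hcdγ⟩ := Set.exists_of_ssubset h3
      obtain ⟨⟨a, b⟩, habθ, habγ⟩ := Set.exists_of_ssubset h2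
      have habρ : (a, b) ∉ ρ := fun h => habγ ⟨habθ, h⟩
      have hcdθ : (c, d) ∉ θ := fun h => hcdγ ⟨h, hcdρ⟩
      set e : Fin k → Fin k := fun x => if (d, x) ∈ θ ∩ ρ then b else a with he
      set F : Ops k := ⟨1, fun x => e (x 0)⟩ with hF
      have hθab : ∀ x y : Fin k, (e x, e y) ∈ θ := by
        intro x y
        simp only [he]
        split_ifs with h1' h2' h2'
        · exact θr b
        · exact θs a b habθ
        · exact habθ
        · exact θr a
      have hFθ : F ∈ PolB θ := fun u v huv => hθab _ _
      have hFγ : F ∈ PolB (θ ∩ ρ) := by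
        intro u v huv
        have h0 := huv 0
        have heq : e (u 0) = e (v 0) := by
          simp only [he]
          by_cases hd : (d, u 0) ∈ θ ∩ ρ
          · have : (d, v 0) ∈ θ ∩ ρ :=
              ⟨θt d (u 0) (v 0) hd.1 h0.1, ρt d (u 0) (v 0) hd.2 h0.2⟩
            simp [hd, this]
          · have : (d, v 0) ∉ θ ∩ ρ := fun hv => hd
              ⟨θt d (v 0) (u 0) hv.1 (θs _ _ h0.1), ρt d (v 0) (u 0) hv.2 (ρs _ _ h0.2)⟩
            simp [hd, this]
        show (e (u 0), e (v 0)) ∈ θ ∩ ρ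
        rw [heq]
        exact ⟨θr _, ρr _⟩
      have hFρ : F ∈ PolB ρ := (hsub ⟨hFθ, hFγ⟩).2
      have := hFρ (fun _ => c) (fun _ => d) (fun _ => hcdρ)
      have hec : e c = a := by
        simp only [he, if_neg (show (d, c) ∉ θ ∩ ρ from fun h => hcdθ (θs _ _ h.1))]
      have hed : e d = b := by simp only [he, if_pos (show (d, d) ∈ θ ∩ ρ from ⟨θr d, ρr d⟩)]
      change (e c, e d) ∈ ρ at this
      simp only [hF, hec, hed] at this
      exact habρ this
  · constructor
    · exact Set.inter_subset_left
    · intro hsub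
      obtain ⟨⟨a, b⟩, habθ, habγ⟩ := Set.exists_of_ssubset h2
      obtain ⟨⟨c, d⟩, hcdγ, hcdΔ⟩ := Set.exists_of_ssubset h1
      have hcd : c ≠ d := hcdΔ
      set e : Fin k → Fin k := fun x => if x = d then b else a with he
      set F : Ops k := ⟨1, fun x => e (x 0)⟩ with hF
      have hθab : ∀ x y : Fin k, (e x, e y) ∈ θ := by
        intro x y
        simp only [he]
        split_ifs with h1' h2' h2'
        · exact θr b
        · exact θs a b habθ
        · exact habθ
        · exact θr a
      have hFθ : F ∈ PolB θ := fun u v huv => hθab _ _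
      have hFγ : F ∈ PolB (θ ∩ ρ) := (hsub hFθ).2
      have := hFγ (fun _ => c) (fun _ => d) (fun _ => hcdγ)
      have hec : e c = a := by simp only [he, if_neg hcd]
      have hed : e d = b := by simp only [he, if_pos rfl]
      change (e c, e d) ∈ θ ∩ ρ at this
      simp only [hF, hec, hed] at this
      exact habγ this
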